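/- Let $W \in \mathbb{C}^{l \times n}$, write $W = V + \mathfrak{i} T$ with $V, T$ real, and define $f_W(g) = \mathrm{tr}((gW)^* gW)$ on $O_l(\mathbb{C})$. Then the identity $e$ is a critical point of $f_W$ (the derivative of $f_W$ at $e$ vanishes on all skew-symmetric complex matrices, the tangent space of $O_l(\mathbb{C})$ at $e$) if and only if $WW^*$ has real entries. -/

import Mathlib

open Matrix

lemma trace_stdBasisMatrix_mul' {l : ℕ} (i j : Fin l) (c : ℂ)
    (M : Matrix (Fin l) (Fin l) ℂ) :
    (Matrix.single i j c * M).trace = c * M j i := by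
  simp [Matrix.trace, Matrix.diag, Matrix.mul_apply, Matrix.single, ite_and,
    Finset.sum_ite_eq]

/-- Equation (4.8): the identity is a critical point of `f_W(g) = tr((gW)* gW)` on
`O_l(ℂ)` (the derivative `Z ↦ tr(W*(Z + Z*)W)` vanishes on all skew-symmetric complex
matrices, the tangent space at the identity) if and only if `W W*` is real. -/
theorem critical_point_iff_real {l n : ℕ} (W : Matrix (Fin l) (Fin n) ℂ) :
    (∀ Z : Matrix (Fin l) (Fin l) ℂ, Zᵀ = -Z →
        (Wᴴ * (Z + Zᴴ) * W).trace = 0) ↔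
      ∀ i j, ((W * Wᴴ) i j).im = 0 := by
  set A := W * Wᴴ with hA
  have hHerm : ∀ i j, A j i = (starRingEnd ℂ) (A i j) := by
    intro i j
    have hAH : Aᴴ = A := by
      rw [hA, conjTranspose_mul, conjTranspose_conjTranspose]
    have := congrFun (congrFun hAH j) i
    rw [conjTranspose_apply] at this
    exact this.symm
  constructor
  · intro h i j
    by_cases hij : i = j
    · subst hij
      exact Complex.conj_eq_iff_im.mp (hHerm i i).symm
    · set Z : Matrix (Fin l) (Fin l) ℂ :=
        Complex.I • (Matrix.single i j 1 - Matrix.single j i 1) with hZdef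
      have hskew : Zᵀ = -Z := by
        ext a b
        simp only [hZdef, transpose_apply, Matrix.smul_apply, Matrix.sub_apply, Matrix.neg_apply, smul_eq_mul,
          Matrix.single, Matrix.of_apply]
        split_ifs <;> simp_all <;> ring
      have hZH : Zᴴ = Z := by
        ext a b
        simp only [hZdef, conjTranspose_apply, Matrix.smul_apply, Matrix.sub_apply, smul_eq_mul,
          Matrix.single, Matrix.of_apply, _root_.map_mul, _root_.map_sub,
          Complex.conj_I, apply_ite (starRingEnd ℂ), _root_.map_one, _root_.map_zero]
        split_ifs <;> simp_all <;> ring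
      have h0 := h Z hskew
      rw [hZH, Matrix.trace_mul_cycle, ← hA] at h0
      have hcalc : (A * (Z + Z)).trace = 2 * Complex.I * (A j i - A i j) := by
        rw [Matrix.trace_mul_comm, hZdef]
        simp only [Matrix.add_mul, Matrix.trace_add, Matrix.smul_mul, Matrix.sub_mul,
          Matrix.trace_smul, Matrix.trace_sub, trace_stdBasisMatrix_mul', smul_eq_mul]
        ring
      rw [hcalc] at h0
      have h2I : (2 : ℂ) * Complex.I ≠ 0 := by
        simp [Complex.I_ne_zero]
      have h1 : A j i = A i j :=
        sub_eq_zero.mp ((mul_eq_zero.mp h0).resolve_left h2I)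
      rw [hHerm i j] at h1
      exact Complex.conj_eq_iff_im.mp h1
  · intro h Z hZ
    have hAt : Aᵀ = A := by
      ext a b
      rw [transpose_apply, hHerm a b]
      exact Complex.conj_eq_iff_im.mpr (h a b)
    set M := Z + Zᴴ with hMdef
    have hz : ∀ a b, Z b a = -Z a b := by
      intro a b
      have := congrFun (congrFun hZ a) b
      simpa using this
    have hM : Mᵀ = -M := by
      ext a b
      simp only [hMdef, transpose_apply, Matrix.add_apply, conjTranspose_apply, Matrix.neg_apply]
      rw [hz a b]
      simp only [star_neg]
      ring
    rw [Matrix.trace_mul_cycle, ← hA]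
    have key : (A * M).trace = -((A * M).trace) := by
      conv_lhs => rw [← Matrix.trace_transpose, Matrix.transpose_mul, hM, hAt,
        Matrix.neg_mul, Matrix.trace_neg, Matrix.trace_mul_comm]
    linear_combination key / 2
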